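/- Let f ∈ K[s,t] be a nonzero homogeneous polynomial of degree d. Suppose g₁, g₂ ∈ K[s,t] are homogeneous of degrees d₁ and d₂ with 2 ≤ d₁ ≤ d₂ and d₁ + d₂ = d + 2, having no common zero other than (0,0), and that the apolar ideal {G ∈ K[s,t] : G∘f = 0} equals the ideal generated by g₁ and g₂. Let h₁, …, h_d be any K-basis of W_f and let φ_h : K[z₁,…,z_d] → K[s,t] be the K-algebra homomorphism with φ_h(z_i) = h_i. Let ψ : K[z₁,…,z_d] → K[s,t] be the K-algebra homomorphism sending the variables z₁,…,z_d in order to g₂·s^{d₁−2}, g₂·s^{d₁−3}t, …, g₂·t^{d₁−2}, g₁·s^{d₂−2}, g₁·s^{d₂−3}t, …, g₁·t^{d₂−2}. Then there exists a graded K-algebra automorphism σ of K[z₁,…,z_d], induced by an invertible linear substitution of the variables z₁,…,z_d, such that σ maps the ideal ker φ_h onto the ideal ker ψ. (In geometric terms: the projected curve π_p(C_d) ⊂ P^{d−1}, for p the point of P^d corresponding to f, is projectively equivalent to the curve parametrized by [g₂(α,β)α^{d₁−2} : … : g₂(α,β)β^{d₁−2} : g₁(α,β)α^{d₂−2} : …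 : g₁(α,β)β^{d₂−2}].) -/

import Mathlib

open MvPolynomial Matrix

/-- The apolarity action `G ∘ f = G(∂/∂s, ∂/∂t) f` for bivariate polynomials. -/
noncomputable def apolar {K : Type*} [CommSemiring K] (G f : MvPolynomial (Fin 2) K) :
    MvPolynomial (Fin 2) K :=
  ∑ a ∈ G.support, G.coeff a • ((⇑(pderiv (0 : Fin 2)))^[a 0] ((⇑(pderiv (1 : Fin 2)))^[a 1] f))

lemma hc_mul {K : Type*} [Field K] (A g : MvPolynomial (Fin 2) K) {k n : ℕ}
    (hg : g.IsHomogeneous k) (hkn : k ≤ n) :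
    homogeneousComponent n (A * g) = homogeneousComponent (n - k) A * g := by
  conv_lhs => rw [← sum_homogeneousComponent A, Finset.sum_mul, map_sum]
  have key : ∀ i : ℕ, homogeneousComponent n (homogeneousComponent i A * g)
      = if i = n - k then homogeneousComponent (n - k) A * g else 0 := by
    intro i
    rw [homogeneousComponent_of_mem ((mem_homogeneousSubmodule _ _).mpr
      ((homogeneousComponent_isHomogeneous i A).mul hg))]
    by_cases hi : i = n - k
    · subst hi; rw [if_pos (show n = n - k + k by omega), if_pos rfl]
    · rw [if_neg (show ¬ n = i + k by omega), if_neg hi]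
  simp only [key]
  rw [Finset.sum_ite_eq' (Finset.range (A.totalDegree + 1))]
  split_ifs with hmem
  · rfl
  · rw [homogeneousComponent_eq_zero _ _ (by
      simp only [Finset.mem_range, not_lt] at hmem; omega), zero_mul]

lemma mul_mem_of_homog {K : Type*} [Field K] {P g : MvPolynomial (Fin 2) K} {m : ℕ}
    (hP : P.IsHomogeneous m) (S : Submodule K (MvPolynomial (Fin 2) K))
    (hgen : ∀ j : ℕ, j ≤ m → g * X 0 ^ (m - j) * X 1 ^ j ∈ S) : P * g ∈ S := by
  have hrw : P * g = ∑ u ∈ P.support, (P.coeff u) • (g * X 0 ^ (u 0) * X 1 ^ (u 1)) := by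
    conv_lhs => rw [← P.support_sum_monomial_coeff, Finset.sum_mul]
    refine Finset.sum_congr rfl fun u hu => ?_
    rw [monomial_eq, Finsupp.prod_pow, Fin.prod_univ_two, smul_eq_C_mul]
    ring
  rw [hrw]
  refine Submodule.sum_mem _ fun u hu => Submodule.smul_mem _ _ ?_
  have hdeg : u 0 + u 1 = m := by
    have h0 := hP (mem_support_iff.mp hu)
    rw [Finsupp.weight_apply, Finsupp.sum_fintype _ _ (fun i => by simp), Fin.sum_univ_two] at h0
    simpa using h0
  have hx := hgen (u 1) (by omega)
  rwa [show m - u 1 = u 0 by omega] at hx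

theorem stmt2 {K : Type*} [Field K] [IsAlgClosed K] [CharZero K]
    (d d₁ d₂ : ℕ) (f g₁ g₂ : MvPolynomial (Fin 2) K)
    (hf : f ≠ 0) (hfd : f.IsHomogeneous d)
    (hg₁ : g₁.IsHomogeneous d₁) (hg₂ : g₂.IsHomogeneous d₂)
    (hd₁ : 2 ≤ d₁) (hd₁₂ : d₁ ≤ d₂) (hsum : d₁ + d₂ = d + 2)
    (hcz : ∀ x y : K, eval ![x, y] g₁ = 0 → eval ![x, y] g₂ = 0 → x = 0 ∧ y = 0)
    (hap : ∀ G : MvPolynomial (Fin 2) K, apolar G f = 0 ↔ G ∈ Ideal.span {g₁, g₂})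
    (h : Fin d → MvPolynomial (Fin 2) K) (hind : LinearIndependent K h)
    (hspan : (Submodule.span K (Set.range h) : Set (MvPolynomial (Fin 2) K))
      = {G | G.IsHomogeneous d ∧ apolar G f = 0}) :
    ∃ M : Matrix (Fin d) (Fin d) K, IsUnit M ∧
      Ideal.map
        (aeval (fun i : Fin d => ∑ j : Fin d, C (M i j) * X j) :
          MvPolynomial (Fin d) K →ₐ[K] MvPolynomial (Fin d) K)
        (RingHom.ker (aeval h : MvPolynomial (Fin d) K →ₐ[K] MvPolynomial (Fin 2) K))
      = RingHom.ker
          (aeval (fun i : Fin d =>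
            if (i : ℕ) ≤ d₁ - 2 then g₂ * X 0 ^ (d₁ - 2 - (i : ℕ)) * X 1 ^ (i : ℕ)
            else g₁ * X 0 ^ (d₂ - 2 - ((i : ℕ) - (d₁ - 1))) * X 1 ^ ((i : ℕ) - (d₁ - 1))) :
            MvPolynomial (Fin d) K →ₐ[K] MvPolynomial (Fin 2) K) := by
  classical
  set w : Fin d → MvPolynomial (Fin 2) K := fun i =>
    if (i : ℕ) ≤ d₁ - 2 then g₂ * X 0 ^ (d₁ - 2 - (i : ℕ)) * X 1 ^ (i : ℕ)
    else g₁ * X 0 ^ (d₂ - 2 - ((i : ℕ) - (d₁ - 1))) * X 1 ^ ((i : ℕ) - (d₁ - 1)) with hw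
  -- each w i lies in the span of h
  have hwmem : ∀ i, w i ∈ Submodule.span K (Set.range h) := by
    intro i
    have hmem : w i ∈ {G : MvPolynomial (Fin 2) K | G.IsHomogeneous d ∧ apolar G f = 0} := by
      constructor
      · rw [hw]; dsimp only
        split_ifs with hi
        · have H := (hg₂.mul (isHomogeneous_X_pow (0 : Fin 2) (d₁ - 2 - (i : ℕ)))).mul
            (isHomogeneous_X_pow (1 : Fin 2) (i : ℕ))
          have e : d₂ + (d₁ - 2 - (i : ℕ)) + (i : ℕ) = d := by omega
          rwa [e] at H
        · have hlt := i.isLt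
          have H := (hg₁.mul (isHomogeneous_X_pow (0 : Fin 2) (d₂ - 2 - ((i : ℕ) - (d₁ - 1))))).mul
            (isHomogeneous_X_pow (1 : Fin 2) ((i : ℕ) - (d₁ - 1)))
          have e : d₁ + (d₂ - 2 - ((i : ℕ) - (d₁ - 1))) + ((i : ℕ) - (d₁ - 1)) = d := by omega
          rwa [e] at H
      · rw [hap, hw]; dsimp only
        split_ifs with hi
        · exact Ideal.mul_mem_right _ _ (Ideal.mul_mem_right _ _
            (Ideal.subset_span (Set.mem_insert_of_mem _ rfl)))
        · exact Ideal.mul_mem_right _ _ (Ideal.mul_mem_right _ _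
            (Ideal.subset_span (Set.mem_insert _ _)))
    rw [← hspan] at hmem
    exact hmem
  -- every element of the set lies in the span of w
  have hset_sub : ∀ G : MvPolynomial (Fin 2) K, G.IsHomogeneous d → apolar G f = 0 →
      G ∈ Submodule.span K (Set.range w) := by
    intro G hGd hGa
    obtain ⟨A, B, hAB⟩ := Ideal.mem_span_pair.mp ((hap G).mp hGa)
    have hG2 : homogeneousComponent d (A * g₁ + B * g₂) = G := by
      rw [hAB, homogeneousComponent_of_mem ((mem_homogeneousSubmodule _ _).mpr hGd), if_pos rfl]
    rw [← hG2, map_add, hc_mul A g₁ hg₁ (by omega), hc_mul B g₂ hg₂ (by omega)]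
    refine Submodule.add_mem _ ?_ ?_
    · refine mul_mem_of_homog (m := d - d₁)
        (homogeneousComponent_isHomogeneous (d - d₁) A) _ fun j hj => ?_
      refine Submodule.subset_span ⟨⟨d₁ - 1 + j, by omega⟩, ?_⟩
      rw [hw]; dsimp only
      rw [if_neg (show ¬ (d₁ - 1 + j ≤ d₁ - 2) by omega)]
      have e1 : (d₁ - 1 + j) - (d₁ - 1) = j := by omega
      have e2 : d₂ - 2 - j = d - d₁ - j := by omega
      simp only [e1, e2]
    · refine mul_mem_of_homog (m := d - d₂)
        (homogeneousComponent_isHomogeneous (d - d₂) B) _ fun j hj => ?_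
      refine Submodule.subset_span ⟨⟨j, by omega⟩, ?_⟩
      rw [hw]; dsimp only
      rw [if_pos (show j ≤ d₁ - 2 by omega)]
      have e2 : d₁ - 2 - j = d - d₂ - j := by omega
      simp only [e2]
  -- the two spans agree
  have hspan_eq : Submodule.span K (Set.range w) = Submodule.span K (Set.range h) := by
    apply le_antisymm
    · rw [Submodule.span_le]; rintro _ ⟨i, rfl⟩; exact hwmem i
    · rw [Submodule.span_le]; rintro _ ⟨j, rfl⟩
      have hmem : h j ∈ (Submodule.span K (Set.range h) : Set (MvPolynomial (Fin 2) K)) :=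
        Submodule.subset_span (Set.mem_range_self j)
      rw [hspan] at hmem
      exact hset_sub _ hmem.1 hmem.2
  -- w is linearly independent
  have hwind : LinearIndependent K w := by
    have hfr : Set.finrank K (Set.range w) = Set.finrank K (Set.range h) := by
      unfold Set.finrank; rw [hspan_eq]
    rw [linearIndependent_iff_card_eq_finrank_span, hfr]
    exact linearIndependent_iff_card_eq_finrank_span.mp hind
  -- bases
  let Bw : Module.Basis (Fin d) K (Submodule.span K (Set.range w)) := Module.Basis.span hwind
  let Bh' : Module.Basis (Fin d) K (Submodule.span K (Set.range w)) :=
    (Module.Basis.span hind).map (LinearEquiv.ofEq _ _ hspan_eq.symm)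
  have hBh' : ∀ i, (Bh' i : MvPolynomial (Fin 2) K) = h i := by
    intro i
    simp only [Bh', Module.Basis.map_apply, LinearEquiv.coe_ofEq_apply]
    exact congrArg Subtype.val (Module.Basis.span_apply hind i)
  have hBw : ∀ j, (Bw j : MvPolynomial (Fin 2) K) = w j := fun j => congrArg Subtype.val (Module.Basis.span_apply hwind j)
  set N : Matrix (Fin d) (Fin d) K := fun i j => Bw.repr (Bh' i) j with hN
  have hrepr : ∀ i, h i = ∑ j, N i j • w j := by
    intro i
    have hsr := Bw.sum_repr (Bh' i)
    have := congrArg (Subtype.val) hsr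
    simp only [AddSubmonoidClass.coe_finset_sum, SetLike.val_smul, hBw, hBh'] at this
    exact this.symm
  have hNunit : IsUnit N := by
    have hNt : N = (Bw.toMatrix Bh')ᵀ := by
      ext i j; simp [hN, Module.Basis.toMatrix_apply, Matrix.transpose_apply]
    have hinv : IsUnit (Bw.toMatrix Bh') := by
      letI := Bw.invertibleToMatrix Bh'
      exact isUnit_of_invertible _
    rw [hNt, Matrix.isUnit_iff_isUnit_det, Matrix.det_transpose]
    exact (Matrix.isUnit_iff_isUnit_det _).mp hinv
  refine ⟨N, hNunit, ?_⟩
  set σ : MvPolynomial (Fin d) K →ₐ[K] MvPolynomial (Fin d) K :=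
    aeval (fun i : Fin d => ∑ j : Fin d, C (N i j) * X j) with hσ
  have hcomp : (aeval w).comp σ = (aeval h : MvPolynomial (Fin d) K →ₐ[K] MvPolynomial (Fin 2) K) := by
    apply algHom_ext
    intro i
    rw [AlgHom.comp_apply, aeval_X, aeval_X, map_sum, hrepr i]
    refine Finset.sum_congr rfl fun j _ => ?_
    rw [_root_.map_mul, aeval_C, aeval_X, algebraMap_eq, smul_eq_C_mul]
  have hNdet : IsUnit N.det := (Matrix.isUnit_iff_isUnit_det N).mp hNunit
  have hXmem : ∀ k : Fin d, X k ∈ Set.range σ := by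
    intro k
    refine ⟨∑ j, C (N⁻¹ k j) * X j, ?_⟩
    rw [hσ, map_sum]
    simp only [_root_.map_mul, aeval_C, aeval_X, algebraMap_eq]
    have step : ∀ j, C (N⁻¹ k j) * (∑ l, C (N j l) * X l)
        = ∑ l, C (N⁻¹ k j) * (C (N j l) * X l) := fun j => Finset.mul_sum _ _ _
    simp only [step]
    rw [Finset.sum_comm]
    have step2 : ∀ l, (∑ j, C (N⁻¹ k j) * (C (N j l) * X l))
        = C ((N⁻¹ * N) k l) * X l := by
      intro l
      rw [Matrix.mul_apply, map_sum, Finset.sum_mul]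
      exact Finset.sum_congr rfl fun j _ => by rw [_root_.map_mul, mul_assoc]
    simp only [step2]
    rw [Matrix.nonsing_inv_mul N hNdet]
    simp [Matrix.one_apply, apply_ite C, ite_mul]
  have hsurj : Function.Surjective σ := by
    have hrange : σ.range = ⊤ := by
      rw [eq_top_iff, ← adjoin_range_X]
      refine Algebra.adjoin_le ?_
      rintro _ ⟨k, rfl⟩
      exact hXmem k
    exact (AlgHom.range_eq_top σ).mp hrange
  have hker : RingHom.ker (aeval h : MvPolynomial (Fin d) K →ₐ[K] MvPolynomial (Fin 2) K)
      = Ideal.comap σ (RingHom.ker (aeval w : MvPolynomial (Fin d) K →ₐ[K] MvPolynomial (Fin 2) K)) := by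
    rw [← hcomp]
    exact (AlgHom.comap_ker _ _).symm
  rw [hker]
  exact Ideal.map_comap_of_surjective (σ : MvPolynomial (Fin d) K →+* MvPolynomial (Fin d) K) hsurj _
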